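/- arXiv:1405.3433 — 3 statements merged into one kernel-verified Lean document; each statement's English description precedes it below -/
import Mathlib

section
/- Let A, B, C be groups such that B is a normal subgroup of A with cyclic quotient A/B, and C is a subgroup of B of finite index. If B is finitely generated, then there exists a subgroup C' of C such that C' is of finite index in B, and there exists a subgroup B' of A of finite index in A with C' a normal subgroup of B' such that the quotient B'/C' is cyclic. -/
/-- A finitely generated group has finitely many homomorphisms to a finite monoid. -/
lemma aux_finite_monoidHom {G : Type*} [Group G] (hfg : Group.FG G)
    (M : Type*) [Monoid M] [Finite M] : Finite (G →* M) := by
  obtain ⟨S, hS⟩ := hfg.out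
  have hinj : Function.Injective fun (f : G →* M) (s : S) => f s := by
    intro f g hfg'
    refine MonoidHom.eq_of_eqOn_dense hS ?_
    intro x hx
    exact congrFun hfg' ⟨x, hx⟩
  exact Finite.of_injective _ hinj

theorem stmt_0 {A : Type*} [Group A] (B C : Subgroup A)
    [B.Normal] (hcyc : IsCyclic (A ⧸ B)) (hCB : C ≤ B)
    (hfin : (C.subgroupOf B).FiniteIndex) (hfg : Group.FG B) :
    ∃ C' B' : Subgroup A, C' ≤ C ∧ (C'.subgroupOf B).FiniteIndex ∧
      B'.FiniteIndex ∧ C' ≤ B' ∧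
      ∃ hn : (C'.subgroupOf B').Normal,
        letI := hn
        IsCyclic (B' ⧸ C'.subgroupOf B') := by
  classical
  haveI := hfin
  obtain ⟨g, hg⟩ := hcyc.exists_generator
  obtain ⟨a, rfl⟩ := QuotientGroup.mk_surjective g
  set H : Subgroup B := C.subgroupOf B with hHdef
  set P := Equiv.Perm (B ⧸ H) with hPdef
  haveI : Finite (B →* P) := aux_finite_monoidHom hfg P
  -- the "characteristic core"
  set K : Subgroup B := ⨅ φ : (B →* P), φ.ker with hKdef
  haveI hKfin : K.FiniteIndex := Subgroup.finiteIndex_iInf fun φ => inferInstance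
  have hKH : K ≤ H := by
    refine le_trans (iInf_le _ (MulAction.toPermHom B (B ⧸ H))) ?_
    rw [← Subgroup.normalCore_eq_ker]
    exact Subgroup.normalCore_le H
  -- K is invariant under all automorphisms of B
  have hconj : ∀ e : B ≃* B, K.comap e.toMonoidHom = K := by
    intro e
    have h1 : K.comap e.toMonoidHom = ⨅ φ : (B →* P), (φ.comp e.toMonoidHom).ker := by
      rw [hKdef, Subgroup.comap_iInf]
      exact iInf_congr fun φ => MonoidHom.comap_ker _ _
    rw [h1, hKdef]
    refine le_antisymm (le_iInf fun ψ => ?_) (le_iInf fun φ => ?_)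
    · refine iInf_le_of_le (ψ.comp e.symm.toMonoidHom) (le_of_eq ?_)
      congr 1
      ext x
      simp
    · exact iInf_le_of_le (φ.comp e.toMonoidHom) le_rfl
  set C' : Subgroup A := K.map B.subtype with hC'def
  have hC'B : C' ≤ B := by
    rintro x ⟨y, _, rfl⟩
    exact y.2
  have hsubOf : C'.subgroupOf B = K :=
    Subgroup.comap_map_eq_self_of_injective B.subtype_injective K
  have hC'C : C' ≤ C := by
    calc C' ≤ H.map B.subtype := Subgroup.map_mono hKH
    _ = C ⊓ B := Subgroup.subgroupOf_map_subtype C B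
    _ ≤ C := inf_le_left
  -- a normalizes C'
  have hmemC' : ∀ x : A, x ∈ C' ↔ ∃ hx : x ∈ B, (⟨x, hx⟩ : B) ∈ K := by
    intro x
    constructor
    · rintro ⟨y, hy, rfl⟩
      exact ⟨y.2, hy⟩
    · rintro ⟨hx, hxK⟩
      exact ⟨⟨x, hx⟩, hxK, rfl⟩
  have hanorm : ∀ b : A, b ∈ Subgroup.normalizer (C' : Set A) := by
    intro b
    rw [Subgroup.mem_normalizer_iff]
    intro h
    constructor
    · intro hh
      obtain ⟨hhB, hhK⟩ := (hmemC' h).mp hh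
      have hK2 : (MulAut.conjNormal b : B ≃* B) ⟨h, hhB⟩ ∈ K := by
        have h4 := hconj (MulAut.conjNormal b : B ≃* B)
        rw [← h4] at hhK
        simpa using Subgroup.mem_comap.mp hhK
      have hcoe : (((MulAut.conjNormal b : B ≃* B) ⟨h, hhB⟩ : B) : A) = b * h * b⁻¹ :=
        MulAut.conjNormal_apply b ⟨h, hhB⟩
      rw [← hcoe]
      exact ⟨_, hK2, rfl⟩
    · intro hh
      obtain ⟨hhB, hhK⟩ := (hmemC' _).mp hh
      have h2 : ((MulAut.conjNormal b).symm ⟨b * h * b⁻¹, hhB⟩ : B) ∈ K := by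
        have h4 := hconj ((MulAut.conjNormal b).symm : B ≃* B)
        rw [← h4] at hhK
        simpa using Subgroup.mem_comap.mp hhK
      have h3 : (((MulAut.conjNormal b).symm ⟨b * h * b⁻¹, hhB⟩ : B) : A) = h := by
        rw [MulAut.conjNormal_symm_apply]
        group
      exact ⟨_, h2, h3⟩
  have haC' : a ∈ Subgroup.normalizer (C' : Set A) := hanorm a
  set B' : Subgroup A := C' ⊔ Subgroup.zpowers a with hB'def
  have hC'B' : C' ≤ B' := le_sup_left
  have haB' : a ∈ B' := Subgroup.mem_sup_right (Subgroup.mem_zpowers a)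
  have hB'norm : B' ≤ Subgroup.normalizer (C' : Set A) :=
    sup_le Subgroup.le_normalizer (Subgroup.zpowers_le.mpr haC')
  -- conjugation of C' by powers of a
  have hconjk : ∀ (k : ℤ) (c : A), c ∈ C' → a ^ k * c * a ^ (-k) ∈ C' := by
    intro k c hc
    have hk : a ^ k ∈ Subgroup.normalizer (C' : Set A) := Subgroup.zpow_mem _ haC' k
    have := (Subgroup.mem_normalizer_iff.mp hk c).mp hc
    simpa [zpow_neg] using this
  -- decomposition subgroup
  set S : Subgroup A :=
    { carrier := {x | ∃ c ∈ C', ∃ k : ℤ, c * a ^ k = x}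
      one_mem' := ⟨1, C'.one_mem, 0, by simp⟩
      mul_mem' := by
        rintro x y ⟨c, hc, k, rfl⟩ ⟨c', hc', m, rfl⟩
        refine ⟨c * (a ^ k * c' * a ^ (-k)), C'.mul_mem hc (hconjk k c' hc'), k + m, ?_⟩
        group
      inv_mem' := by
        rintro x ⟨c, hc, k, rfl⟩
        refine ⟨a ^ (-k) * c⁻¹ * a ^ (-(-k)), hconjk (-k) c⁻¹ (C'.inv_mem hc), -k, ?_⟩
        group } with hSdef
  have hdecomp : ∀ x ∈ B', ∃ c ∈ C', ∃ k : ℤ, c * a ^ k = x := by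
    intro x hx
    have hle : B' ≤ S := by
      refine sup_le ?_ ?_
      · intro c hc
        exact ⟨c, hc, 0, by simp⟩
      · intro y hy
        obtain ⟨k, rfl⟩ := hy
        exact ⟨1, C'.one_mem, k, by simp⟩
    exact hle hx
  -- normality
  have hn : (C'.subgroupOf B').Normal := by
    constructor
    intro n hn' g
    have hg' : (g : A) ∈ Subgroup.normalizer (C' : Set A) := hB'norm g.2
    have : (g : A) * (n : A) * (g : A)⁻¹ ∈ C' :=
      (Subgroup.mem_normalizer_iff.mp hg' (n : A)).mp hn'
    simpa [Subgroup.mem_subgroupOf] using this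
  -- finite index of C'.subgroupOf B
  have hfinK : (C'.subgroupOf B).FiniteIndex := by rw [hsubOf]; exact hKfin
  -- finite index of B'
  have hKB' : K ≤ B'.subgroupOf B := by
    intro x hx
    have : (x : A) ∈ C' := ⟨x, hx, rfl⟩
    exact hC'B' this
  haveI : (B'.subgroupOf B).FiniteIndex := Subgroup.finiteIndex_of_le hKB'
  haveI : Finite (B ⧸ B'.subgroupOf B) := Subgroup.finite_quotient_of_finiteIndex
  haveI hB'fin : B'.FiniteIndex := by
    have hmapwd : ∀ b₁ b₂ : B, (QuotientGroup.leftRel (B'.subgroupOf B)) b₁ b₂ →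
        (QuotientGroup.leftRel B') (b₁ : A) (b₂ : A) := by
      intro b₁ b₂ h
      rw [QuotientGroup.leftRel_apply] at h ⊢
      simpa [Subgroup.mem_subgroupOf] using h
    set q : B ⧸ B'.subgroupOf B → A ⧸ B' :=
      Quotient.map' Subtype.val hmapwd with hqdef
    have hsurj : Function.Surjective q := by
      intro x
      induction x using QuotientGroup.induction_on with
      | H y =>
        obtain ⟨k, hk⟩ := hg (QuotientGroup.mk y)
        have hk' : ((a ^ k : A) : A ⧸ B) = QuotientGroup.mk y := by
          rw [QuotientGroup.mk_zpow]; exact hk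
        have hb0 : (a ^ k)⁻¹ * y ∈ B := QuotientGroup.eq.mp hk'
        have hcB : a ^ k * ((a ^ k)⁻¹ * y) * (a ^ k)⁻¹ ∈ B :=
          Subgroup.Normal.conj_mem ‹B.Normal› _ hb0 _
        refine ⟨QuotientGroup.mk ⟨_, hcB⟩, ?_⟩
        have : q (QuotientGroup.mk ⟨_, hcB⟩) =
            QuotientGroup.mk (a ^ k * ((a ^ k)⁻¹ * y) * (a ^ k)⁻¹) := rfl
        rw [this, QuotientGroup.eq]
        have heq : (a ^ k * ((a ^ k)⁻¹ * y) * (a ^ k)⁻¹)⁻¹ * y = a ^ k := by group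
        rw [heq]
        exact Subgroup.zpow_mem _ haB' k
    haveI : Finite (A ⧸ B') := Finite.of_surjective q hsurj
    exact Subgroup.finiteIndex_of_finite_quotient
  -- cyclicity
  refine ⟨C', B', hC'C, hfinK, hB'fin, hC'B', hn, ?_⟩
  letI := hn
  refine ⟨⟨QuotientGroup.mk ⟨a, haB'⟩, ?_⟩⟩
  intro x
  induction x using QuotientGroup.induction_on with
  | H y =>
    obtain ⟨c, hc, k, hck⟩ := hdecomp (y : A) y.2
    have hcB' : c ∈ B' := hC'B' hc
    have hy : y = (⟨c, hcB'⟩ : B') * (⟨a, haB'⟩ : B') ^ k := by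
      apply Subtype.ext
      push_cast
      exact hck.symm
    refine ⟨k, ?_⟩
    rw [hy, QuotientGroup.mk_mul, QuotientGroup.mk_zpow]
    have h1 : (QuotientGroup.mk (⟨c, hcB'⟩ : B') : B' ⧸ C'.subgroupOf B') = 1 := by
      rw [QuotientGroup.eq_one_iff]
      exact hc
    rw [h1, one_mul]
end

section
/- Let G be a group and H a normal subgroup of G. If the quotient G/H is virtually polycyclic and H is finitely generated and virtually solvable, then G is virtually solvable. -/
/-- A group is polycyclic if it admits a subnormal series with cyclic quotients. -/
def IsPolycyclic (G : Type*) [Group G] : Prop :=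
  ∃ (n : ℕ) (s : Fin (n + 1) → Subgroup G),
    s 0 = ⊥ ∧ s (Fin.last n) = ⊤ ∧
    ∀ i : Fin n, s i.castSucc ≤ s i.succ ∧
      ∃ hn : ((s i.castSucc).subgroupOf (s i.succ)).Normal,
        letI := hn
        IsCyclic (s i.succ ⧸ (s i.castSucc).subgroupOf (s i.succ))

/-- A group is virtually polycyclic if it has a polycyclic subgroup of finite index. -/
def IsVirtuallyPolycyclic (G : Type*) [Group G] : Prop :=
  ∃ H : Subgroup G, H.FiniteIndex ∧ IsPolycyclic H

/-- A group is virtually solvable if it has a solvable subgroup of finite index. -/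
def IsVirtuallySolvable (G : Type*) [Group G] : Prop :=
  ∃ H : Subgroup G, H.FiniteIndex ∧ IsSolvable H

section Aux

open Subgroup

/-- Transfer solvability across a `MulEquiv`. -/
lemma mulEquiv_isSolvable {G G' : Type*} [Group G] [Group G'] (e : G ≃* G') [Group.IsSolvable G] :
    IsSolvable G' :=
  solvable_of_solvable_injective (f := e.symm.toMonoidHom) e.symm.injective

lemma aux_poly {G : Type*} [Group G] :
    ∀ (n : ℕ) (s : Fin (n + 1) → Subgroup G), s 0 = ⊥ →
    (∀ i : Fin n, s i.castSucc ≤ s i.succ ∧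
      ∃ hn : ((s i.castSucc).subgroupOf (s i.succ)).Normal,
        letI := hn
        IsCyclic (s i.succ ⧸ (s i.castSucc).subgroupOf (s i.succ))) →
    IsSolvable (s (Fin.last n)) := by
  intro n
  induction n with
  | zero =>
    intro s h0 _
    have : Fin.last 0 = 0 := rfl
    rw [this, h0]
    exact isSolvable_of_comm fun a b => Subsingleton.elim _ _
  | succ n ih =>
    intro s h0 hstep
    have hind : IsSolvable (s (Fin.last n).castSucc) := by
      have := ih (fun i => s i.castSucc) (by simpa using h0)
        (fun j => by simpa only [Fin.succ_castSucc] using hstep j.castSucc)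
      simpa using this
    obtain ⟨hle, hn, hcyc⟩ := hstep (Fin.last n)
    letI := hn
    haveI : Group.IsSolvable ((s (Fin.last n).castSucc).subgroupOf (s (Fin.last n).succ)) := by
      haveI : Group.IsSolvable _ := hind
      exact mulEquiv_isSolvable (subgroupOfEquivOfLe hle).symm
    haveI : Group.IsSolvable
        ((s (Fin.last n).succ) ⧸ (s (Fin.last n).castSucc).subgroupOf (s (Fin.last n).succ)) := by
      letI := hcyc
      letI := IsCyclic.commGroup
        (α := (s (Fin.last n).succ) ⧸ (s (Fin.last n).castSucc).subgroupOf (s (Fin.last n).succ))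
      exact isSolvable_of_comm fun a b => mul_comm a b
    have key : IsSolvable (s (Fin.last n).succ) :=
      solvable_of_ker_le_range
        ((s (Fin.last n).castSucc).subgroupOf (s (Fin.last n).succ)).subtype
        (QuotientGroup.mk' ((s (Fin.last n).castSucc).subgroupOf (s (Fin.last n).succ)))
        (by rw [QuotientGroup.ker_mk', Subgroup.range_subtype])
    rwa [Fin.succ_last] at key

lemma isSolvable_of_isPolycyclic {G : Type*} [Group G] (h : IsPolycyclic G) : IsSolvable G := by
  obtain ⟨n, s, h0, hl, hstep⟩ := h
  have := aux_poly n s h0 hstep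
  rw [hl] at this
  exact @mulEquiv_isSolvable _ _ _ _ Subgroup.topEquiv this

/-- Transfer virtual solvability across a `MulEquiv`. -/
lemma vs_mulEquiv {G G' : Type*} [Group G] [Group G'] (e : G ≃* G')
    (h : IsVirtuallySolvable G) : IsVirtuallySolvable G' := by
  obtain ⟨K, hKi, hKs⟩ := h
  refine ⟨K.map (e : G →* G'), ⟨?_⟩, ?_⟩
  · rw [Subgroup.map_equiv_eq_comap_symm,
      Subgroup.index_comap_of_surjective _ e.symm.surjective]
    exact hKi.index_ne_zero
  · haveI : Group.IsSolvable _ := hKs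
    exact mulEquiv_isSolvable (Subgroup.equivMapOfInjective K (e : G →* G') e.injective)

/-- If `N` is a solvable normal subgroup and `G ⧸ N` is virtually solvable, then so is `G`. -/
lemma vs_of_quotient {G : Type*} [Group G] (N : Subgroup G) [N.Normal] (hN : IsSolvable N)
    (h : IsVirtuallySolvable (G ⧸ N)) : IsVirtuallySolvable G := by
  obtain ⟨R, hRi, hRs⟩ := h
  set P := R.comap (QuotientGroup.mk' N) with hPdef
  have hNP : N ≤ P := by
    intro x hx
    rw [hPdef, Subgroup.mem_comap, QuotientGroup.mk'_apply,
      (QuotientGroup.eq_one_iff x).mpr hx]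
    exact R.one_mem
  refine ⟨P, ⟨?_⟩, ?_⟩
  · rw [hPdef, Subgroup.index_comap_of_surjective _ (QuotientGroup.mk'_surjective N)]
    exact hRi.index_ne_zero
  · haveI : Group.IsSolvable _ := hN
    haveI : Group.IsSolvable _ := hRs
    refine solvable_of_ker_le_range (Subgroup.inclusion hNP)
      (((QuotientGroup.mk' N).comp P.subtype).codRestrict R fun x => Subgroup.mem_comap.mp x.2) ?_
    rw [MonoidHom.ker_codRestrict, Subgroup.inclusion_range]
    intro x hx
    rw [MonoidHom.mem_ker, MonoidHom.comp_apply, QuotientGroup.mk'_apply,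
      QuotientGroup.eq_one_iff] at hx
    exact Subgroup.mem_subgroupOf.mpr hx

/-- If `F` is a finite normal subgroup and `M ⧸ F` is virtually solvable, then so is `M`. -/
lemma vs_of_finite_normal {M : Type*} [Group M] (F : Subgroup M) [F.Normal] [Finite F]
    (h : IsVirtuallySolvable (M ⧸ F)) : IsVirtuallySolvable M := by
  obtain ⟨R, hRi, hRs⟩ := h
  haveI : Finite (MulAut F) :=
    Finite.of_injective (fun e : MulAut F => (e : F → F)) DFunLike.coe_injective
  set C := (MulAut.conjNormal (G := M) (H := F)).ker with hCdef
  haveI hCfi : C.FiniteIndex := Subgroup.finiteIndex_ker _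
  set P := R.comap (QuotientGroup.mk' F) with hPdef
  haveI hPfi : P.FiniteIndex :=
    ⟨by rw [hPdef, Subgroup.index_comap_of_surjective _ (QuotientGroup.mk'_surjective F)]
        exact hRi.index_ne_zero⟩
  refine ⟨P ⊓ C, inferInstance, ?_⟩
  set D := P ⊓ C with hDdef
  haveI : Group.IsSolvable (F.subgroupOf D) := by
    refine isSolvable_of_comm fun a b => ?_
    apply Subtype.ext
    apply Subtype.ext
    have haF : ((a : D) : M) ∈ F := Subgroup.mem_subgroupOf.mp a.2
    have hbC : ((b : D) : M) ∈ C := (Subgroup.mem_inf.mp (b : D).2).2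
    rw [MonoidHom.mem_ker] at hbC
    have key : ((b : D) : M) * ((a : D) : M) * ((b : D) : M)⁻¹ = ((a : D) : M) := by
      have := congrArg (fun e : MulAut F => ((e ⟨((a : D) : M), haF⟩ : F) : M)) hbC
      simpa [MulAut.conjNormal_apply] using this
    have : ((b : D) : M) * ((a : D) : M) = ((a : D) : M) * ((b : D) : M) := by
      calc ((b : D) : M) * ((a : D) : M)
          = (((b : D) : M) * ((a : D) : M) * ((b : D) : M)⁻¹) * ((b : D) : M) := by group
        _ = ((a : D) : M) * ((b : D) : M) := by rw [key]
    push_cast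
    exact this.symm
  haveI : Group.IsSolvable _ := hRs
  refine solvable_of_ker_le_range (F.subgroupOf D).subtype
    (((QuotientGroup.mk' F).comp D.subtype).codRestrict R fun x =>
      Subgroup.mem_comap.mp (Subgroup.mem_inf.mp x.2).1) ?_
  rw [MonoidHom.ker_codRestrict, Subgroup.range_subtype]
  intro x hx
  rw [MonoidHom.mem_ker, MonoidHom.comp_apply, QuotientGroup.mk'_apply,
    QuotientGroup.eq_one_iff] at hx
  exact Subgroup.mem_subgroupOf.mpr hx

/-- A finitely generated group has finitely many subgroups of any given finite index. -/
lemma finite_subgroups_of_index {H : Type*} [Group H] (hfg : Group.FG H) {n : ℕ} (hn : n ≠ 0) :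
    {S : Subgroup H | S.index = n}.Finite := by
  have key : ∀ S : Subgroup H, S.index = n → ∃ (f : H →* Equiv.Perm (Fin n)) (p : Fin n),
      ∀ x : H, x ∈ S ↔ f x p = p := by
    intro S hS
    haveI : Finite (H ⧸ S) :=
      Nat.finite_of_card_ne_zero (by rw [← Subgroup.index_eq_card, hS]; exact hn)
    have e : H ⧸ S ≃ Fin n :=
      Finite.equivFinOfCardEq (by rw [← Subgroup.index_eq_card, hS])
    set a := MulAction.toPermHom H (H ⧸ S) with hadef
    refine ⟨{ toFun := fun x => (e.symm.trans (a x)).trans e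
              map_one' := by ext i; simp [hadef, MulAction.toPermHom_apply, MulAction.toPerm_apply]
              map_mul' := by intro x y; ext i; simp [hadef, MulAction.toPermHom_apply, MulAction.toPerm_apply, mul_smul] },
      e ((1 : H) : H ⧸ S), fun x => ?_⟩
    simp only [MonoidHom.coe_mk, OneHom.coe_mk, Equiv.trans_apply, Equiv.symm_apply_apply]
    rw [show (a x) ((1 : H) : H ⧸ S) = x • ((1 : H) : H ⧸ S) from rfl]
    rw [MulAction.Quotient.smul_mk, smul_eq_mul, mul_one]
    constructor
    · intro hx
      have : ((x : H) : H ⧸ S) = ((1 : H) : H ⧸ S) := by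
        rw [QuotientGroup.eq]
        simpa using S.inv_mem hx
      rw [this]
    · intro hx
      have := e.injective hx
      rw [QuotientGroup.eq] at this
      simpa using S.inv_mem this
  have : Finite {S : Subgroup H // S.index = n} := by
    choose f p hfp using fun S : {S : Subgroup H // S.index = n} => key S.1 S.2
    haveI : Finite (H →* Equiv.Perm (Fin n)) := by
      obtain ⟨s, hs⟩ := hfg.out
      exact Finite.of_injective
        (fun φ : H →* Equiv.Perm (Fin n) => fun x : (s : Set H) => φ x)
        (fun φ₁ φ₂ hφ => MonoidHom.eq_of_eqOn_dense hs fun x hx => congrFun hφ ⟨x, hx⟩)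
    refine Finite.of_injective (fun S => (f S, p S)) fun S₁ S₂ h12 => ?_
    have h1 : f S₁ = f S₂ := congrArg Prod.fst h12
    have h2 : p S₁ = p S₂ := congrArg Prod.snd h12
    apply Subtype.ext
    ext x
    rw [hfp S₁ x, hfp S₂ x, h1, h2]
  exact Set.finite_coe_iff.mp this

end Aux

theorem stmt_1 {G : Type*} [Group G] (H : Subgroup G) [H.Normal]
    (hq : IsVirtuallyPolycyclic (G ⧸ H)) (hfg : Group.FG H)
    (hs : IsVirtuallySolvable H) : IsVirtuallySolvable G := by
  classical
  -- `G ⧸ H` is virtually solvable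
  obtain ⟨Q, hQi, hQp⟩ := hq
  have hqvs : IsVirtuallySolvable (G ⧸ H) := ⟨Q, hQi, isSolvable_of_isPolycyclic hQp⟩
  obtain ⟨S, hSi, hSs⟩ := hs
  -- the "normal core" of S under conjugation by G
  set T : Subgroup H := ⨅ g : G, S.comap (MulAut.conjNormal g).toMonoidHom with hTdef
  have hTmem : ∀ x : H, x ∈ T ↔ ∀ g : G, MulAut.conjNormal g x ∈ S := by
    intro x
    simp [hTdef, Subgroup.mem_iInf, Subgroup.mem_comap]
  have hTS : T ≤ S := by
    intro x hx
    have := (hTmem x).mp hx 1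
    simpa using this
  have hTsol : IsSolvable T := by
    haveI : Group.IsSolvable _ := hSs
    exact solvable_of_solvable_injective (f := Subgroup.inclusion hTS)
      (Subgroup.inclusion_injective hTS)
  have hidx : ∀ g : G, (S.comap (MulAut.conjNormal g).toMonoidHom).index = S.index :=
    fun g => S.index_comap_of_surjective (MulAut.conjNormal g).surjective
  haveI hTfi : T.FiniteIndex := by
    have hfin : {S' : Subgroup H | S'.index = S.index}.Finite :=
      finite_subgroups_of_index hfg hSi.index_ne_zero
    have hsub : (Set.range fun g : G => S.comap (MulAut.conjNormal g).toMonoidHom) ⊆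
        {S' : Subgroup H | S'.index = S.index} := by
      rintro _ ⟨g, rfl⟩
      exact hidx g
    have hfr : (Set.range fun g : G => S.comap (MulAut.conjNormal g).toMonoidHom).Finite :=
      hfin.subset hsub
    haveI := hfr.to_subtype
    have hT : T = ⨅ K : (Set.range fun g : G => S.comap (MulAut.conjNormal g).toMonoidHom),
        (K : Subgroup H) := by
      apply le_antisymm
      · refine le_iInf fun K => ?_
        obtain ⟨g, hg⟩ := K.2
        rw [hTdef, ← hg]
        exact iInf_le _ g
      · rw [hTdef]
        exact le_iInf fun g => iInf_le _ (⟨_, Set.mem_range_self g⟩ : Set.range fun g : G => S.comap (MulAut.conjNormal g).toMonoidHom)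
    rw [hT]
    refine Subgroup.finiteIndex_iInf fun K => ⟨?_⟩
    obtain ⟨g, hg⟩ := K.2
    rw [← hg]
    rw [show ((fun g : G => S.comap (MulAut.conjNormal g).toMonoidHom) g).index = S.index from hidx g]
    exact hSi.index_ne_zero
  -- push T down to a normal solvable subgroup of G
  set T' : Subgroup G := T.map H.subtype with hT'def
  have hT'H : T' ≤ H := Subgroup.map_subtype_le T
  haveI hT'n : T'.Normal := by
    constructor
    intro x hx g
    obtain ⟨t, ht, rfl⟩ := hx
    refine ⟨MulAut.conjNormal g t, ?_, ?_⟩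
    · refine (hTmem _).mpr fun g' => ?_
      have := (hTmem t).mp ht (g' * g)
      rwa [map_mul, MulAut.mul_apply] at this
    · simp [MulAut.conjNormal_apply]
  have hT'sol : IsSolvable T' := by
    haveI : Group.IsSolvable _ := hTsol
    exact mulEquiv_isSolvable (Subgroup.equivMapOfInjective T H.subtype H.subtype_injective)
  -- the image of H in G ⧸ T' is finite
  haveI : (H.map (QuotientGroup.mk' T')).Normal :=
    Subgroup.Normal.map ‹H.Normal› _ (QuotientGroup.mk'_surjective T')
  have hker : ((QuotientGroup.mk' T').comp H.subtype).ker = T := by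
    ext x
    rw [MonoidHom.mem_ker, MonoidHom.comp_apply, QuotientGroup.mk'_apply,
      QuotientGroup.eq_one_iff]
    constructor
    · rintro ⟨t, ht, hxt⟩
      have : t = x := H.subtype_injective hxt
      rwa [← this]
    · intro hx
      exact ⟨x, hx, rfl⟩
  have hFr : H.map (QuotientGroup.mk' T') = ((QuotientGroup.mk' T').comp H.subtype).range := by
    rw [MonoidHom.range_comp, Subgroup.range_subtype]
  haveI : Finite (H.map (QuotientGroup.mk' T')) := by
    have hq1 : Finite (H ⧸ ((QuotientGroup.mk' T').comp H.subtype).ker) := by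
      rw [hker]; infer_instance
    have h5 := Finite.of_equiv _
      (QuotientGroup.quotientKerEquivRange ((QuotientGroup.mk' T').comp H.subtype)).toEquiv
    rw [hFr]
    exact h5
  -- conclude
  have e3 : ((G ⧸ T') ⧸ (H.map (QuotientGroup.mk' T'))) ≃* G ⧸ H :=
    QuotientGroup.quotientQuotientEquivQuotient T' H hT'H
  have h1 : IsVirtuallySolvable ((G ⧸ T') ⧸ (H.map (QuotientGroup.mk' T'))) :=
    vs_mulEquiv e3.symm hqvs
  have h2 : IsVirtuallySolvable (G ⧸ T') := vs_of_finite_normal (H.map (QuotientGroup.mk' T')) h1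
  exact vs_of_quotient T' hT'sol h2
end

section
/- Let G be a group containing a non-abelian free subgroup and let N be a normal subgroup of G. Then N contains a non-abelian free subgroup or the quotient G/N contains a non-abelian free subgroup. -/
/-- A group has a non-abelian free subgroup if it has a subgroup isomorphic to
the free group of rank 2. -/
def HasFreeSubgroup (G : Type*) [Group G] : Prop :=
  ∃ S : Subgroup G, Nonempty (S ≃* FreeGroup (Fin 2))

namespace FreeSubAux

open FreeGroup List

set_option linter.unusedSectionVars false

variable {α : Type*} [DecidableEq α]

abbrev F2 := FreeGroup (Fin 2)




lemma tail_reduced (hd : α × Bool) (tl : List (α × Bool))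
    (h : reduce (hd :: tl) = hd :: tl) : reduce tl = tl := by
  rcases h2 : reduce tl with _ | ⟨h2d, t2⟩
  · have h' : ([hd] : List (α × Bool)) = hd :: tl := by rw [← h, reduce.cons, h2]
    simp only [List.cons.injEq] at h'
    exact h'.2
  · have h' : (if hd.1 = h2d.1 ∧ hd.2 = !h2d.2 then t2 else hd :: h2d :: t2) = hd :: tl := by
      rw [← h, reduce.cons, h2]
    by_cases hc : hd.1 = h2d.1 ∧ hd.2 = !h2d.2
    · rw [if_pos hc] at h'
      have hlen : (reduce tl).length ≤ tl.length := (reduce.red (L := tl)).length_le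
      rw [h2, h'] at hlen
      simp at hlen
    · rw [if_neg hc] at h'
      simp only [List.cons.injEq, true_and] at h'
      exact h'

lemma exists_head (x : FreeGroup α) (hx : x ≠ 1) :
    ∃ (c : α) (s : Bool) (y : FreeGroup α),
      x = mk [(c, s)] * y ∧ x.toWord = (c, s) :: y.toWord := by
  rcases hw : x.toWord with _ | ⟨⟨c, s⟩, tl⟩
  · exact absurd (toWord_eq_nil_iff.mp hw) hx
  have hred : reduce x.toWord = x.toWord := reduce_toWord x
  rw [hw] at hred
  have htl : reduce tl = tl := tail_reduced _ _ hred
  refine ⟨c, s, mk tl, ?_, ?_⟩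
  · conv_lhs => rw [← mk_toWord (x := x)]
    rw [hw, ← List.singleton_append, ← mul_mk]
  · have : (mk tl).toWord = tl := by rw [toWord_mk, htl]
    rw [this]

lemma toWord_cons_mul (c : α) (s : Bool) (y : FreeGroup α)
    (h : y.toWord.head? ≠ some (c, !s)) :
    (mk [(c, s)] * y).toWord = (c, s) :: y.toWord := by
  have hm : (mk [(c, s)] * y) = mk ((c, s) :: y.toWord) := by
    conv_lhs => rw [← mk_toWord (x := y)]
    rw [mul_mk, List.singleton_append]
  rw [hm, toWord_mk]
  rcases hy : y.toWord with _ | ⟨⟨d, t⟩, tl⟩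
  · rfl
  · have hred : reduce ((d, t) :: tl) = (d, t) :: tl := by rw [← hy, reduce_toWord]
    have hstep : reduce ((c, s) :: (d, t) :: tl) =
        if c = d ∧ s = !t then tl else (c, s) :: (d, t) :: tl := by
      rw [reduce.cons, hred]
    rw [hstep, if_neg]
    rintro ⟨rfl, rfl⟩
    rw [hy] at h
    exact h (by simp)


lemma of_eq_mk (c : α) : of c = mk [(c, true)] := rfl

lemma inv_of_eq_mk (c : α) : (of c)⁻¹ = mk [(c, false)] := by
  rw [of_eq_mk, inv_mk]
  simp [invRev]

lemma toWord_pow_mul (c : α) (s : Bool) (i : ℕ) (y : FreeGroup α)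
    (h : y.toWord.head? ≠ some (c, !s)) :
    ((mk [(c, s)]) ^ i * y).toWord = List.replicate i (c, s) ++ y.toWord := by
  induction i with
  | zero => simp
  | succ n ih =>
    rw [pow_succ', mul_assoc, toWord_cons_mul c s _ ?_, ih, List.replicate_succ,
      List.cons_append]
    rw [ih]
    cases n with
    | zero => simpa using h
    | succ m => simp [List.replicate_succ]

lemma invRev_append (L₁ L₂ : List (α × Bool)) :
    invRev (L₁ ++ L₂) = invRev L₂ ++ invRev L₁ := by
  simp [invRev]

lemma invRev_replicate (i : ℕ) (c : α) (s : Bool) :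
    invRev (List.replicate i (c, s)) = List.replicate i (c, !s) := by
  simp [invRev, List.map_replicate, List.reverse_replicate]

lemma head?_invRev (L : List (α × Bool)) :
    (invRev L).head? = L.getLast?.map (fun p => (p.1, !p.2)) := by
  simp [invRev, List.head?_reverse, List.getLast?_map]

lemma toWord_mul_pow (c : α) (i : ℕ) (x : FreeGroup α)
    (h : x.toWord.getLast? ≠ some (c, false)) :
    (x * of c ^ i).toWord = x.toWord ++ List.replicate i (c, true) := by
  have hhead : (x⁻¹).toWord.head? ≠ some (c, !false) := by
    rw [toWord_inv, head?_invRev]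
    intro hcon
    apply h
    obtain ⟨⟨pc, pb⟩, hp1, hp2⟩ := Option.map_eq_some_iff.mp hcon
    rw [hp1]
    cases pb <;> simp_all
  have h1 : ((x * of c ^ i)⁻¹).toWord = List.replicate i (c, false) ++ (x⁻¹).toWord := by
    rw [mul_inv_rev, ← inv_pow]
    have hrw : (of c)⁻¹ = mk [(c, false)] := inv_of_eq_mk c
    rw [hrw]
    exact toWord_pow_mul c false i x⁻¹ hhead
  have h2 : (x * of c ^ i).toWord = invRev (((x * of c ^ i)⁻¹).toWord) := by
    rw [toWord_inv, invRev_invRev]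
  rw [h2, h1, invRev_append, invRev_replicate, toWord_inv, invRev_invRev]
  simp


lemma mk_single_eq_zpow (c : α) (s : Bool) :
    mk [(c, s)] = of c ^ (if s then (1 : ℤ) else -1) := by
  cases s
  · simp [← inv_of_eq_mk c]
  · simp [of_eq_mk c]

lemma centralizer_pow (c : α) (i : ℕ) (hi : i ≠ 0) :
    ∀ (n : ℕ) (x : FreeGroup α), x.norm ≤ n →
      x * of c ^ i = of c ^ i * x → ∃ k : ℤ, x = of c ^ k := by
  intro n
  induction n with
  | zero =>
    intro x hx _
    refine ⟨0, ?_⟩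
    have : x = 1 := norm_eq_zero.mp (Nat.le_zero.mp hx)
    simp [this]
  | succ n ih =>
    intro x hx hcomm
    by_cases hx1 : x = 1
    · exact ⟨0, by simp [hx1]⟩
    have hcg : Commute (of c) (of c ^ i) := (Commute.refl (of c)).pow_right i
    have h2 : Commute x (of c ^ i) := hcomm
    obtain ⟨d, s, y, hxy, hw⟩ := exists_head x hx1
    have hnormx : x.norm = y.norm + 1 := by
      simp [FreeGroup.norm, hw]
    by_cases hdc : d = c
    · -- cancel at the head
      subst hdc
      set ε : ℤ := if s then 1 else -1 with hε
      have hxy' : x = of d ^ ε * y := by rw [hxy, mk_single_eq_zpow]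
      have hy : y = of d ^ (-ε) * x := by
        rw [hxy', ← mul_assoc, ← zpow_add]
        simp
      have hcy : Commute y (of d ^ i) := by
        rw [hy]
        exact Commute.mul_left (hcg.zpow_left (-ε)) h2
      obtain ⟨k, hk⟩ := ih y (by omega) hcy.eq
      exact ⟨ε + k, by rw [hxy', hk, ← zpow_add]⟩
    · -- head letter differs from c; look at the last letter
      have hxinv : x⁻¹ ≠ 1 := by simpa using hx1
      obtain ⟨d', s', z, hxz, hwz⟩ := exists_head x⁻¹ hxinv
      have hnormz : x.norm = z.norm + 1 := by
        have h5 : x⁻¹.norm = z.norm + 1 := by simp [FreeGroup.norm, hwz]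
        rwa [norm_inv_eq] at h5
      by_cases hd'c : d' = c
      · subst hd'c
        set ε : ℤ := if s' then 1 else -1 with hε
        have hxz' : x⁻¹ = of d' ^ ε * z := by rw [hxz, mk_single_eq_zpow]
        have hx' : x = z⁻¹ * of d' ^ (-ε) := by
          rw [← inv_inv x, hxz', mul_inv_rev, ← zpow_neg]
        have hcz : Commute z⁻¹ (of d' ^ i) := by
          have hz : z⁻¹ = x * of d' ^ ε := by
            rw [hx', mul_assoc, ← zpow_add]
            simp
          rw [hz]
          exact Commute.mul_left h2 (hcg.zpow_left ε)
        obtain ⟨k, hk⟩ := ih z⁻¹ (by rw [norm_inv_eq]; omega) hcz.eq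
        exact ⟨k + (-ε), by rw [hx', hk, ← zpow_add]⟩
      · -- contradiction via first letters
        exfalso
        have h1 : invRev x.toWord = (d', s') :: z.toWord := by
          rw [← toWord_inv]; exact hwz
        have hlast : x.toWord.getLast? = some (d', !s') := by
          have h2' : x.toWord = invRev ((d', s') :: z.toWord) := by
            rw [← h1, invRev_invRev]
          rw [h2']
          simp [invRev, List.getLast?_concat]
        have hL : (x * of c ^ i).toWord = x.toWord ++ List.replicate i (c, true) :=
          toWord_mul_pow c i x (by rw [hlast]; simp [hd'c])
        have hR : (of c ^ i * x).toWord = List.replicate i (c, true) ++ x.toWord := by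
          have h6 := toWord_pow_mul c true i x (by rw [hw]; simp [hdc])
          rwa [← of_eq_mk] at h6
        obtain ⟨j, rfl⟩ : ∃ j, i = j + 1 := ⟨i - 1, by omega⟩
        have h3 : (x.toWord ++ List.replicate (j + 1) (c, true)).head? =
            (List.replicate (j + 1) (c, true) ++ x.toWord).head? := by
          rw [← hL, ← hR, hcomm]
        rw [hw] at h3
        simp [List.replicate_succ] at h3
        exact hdc h3.1


/-- every element of a free group over a subsingleton is a power of `of x0`. -/
lemma zpow_gen {X : Type*} [Subsingleton X] (x0 : X) (z : FreeGroup X) :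
    ∃ k : ℤ, z = FreeGroup.of x0 ^ k := by
  induction z using FreeGroup.induction_on with
  | C1 => exact ⟨0, by simp⟩
  | of x => exact ⟨1, by rw [Subsingleton.elim x x0, zpow_one]⟩
  | inv_of x _ => exact ⟨-1, by rw [Subsingleton.elim x x0, zpow_neg, zpow_one]⟩
  | mul x y hx hy =>
    obtain ⟨k, rfl⟩ := hx
    obtain ⟨l, rfl⟩ := hy
    exact ⟨k + l, by rw [zpow_add]⟩

lemma all_one_of_isEmpty {X : Type*} [IsEmpty X] (z : FreeGroup X) : z = 1 := by
  induction z using FreeGroup.induction_on with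
  | C1 => rfl
  | of x => exact (IsEmpty.false x).elim
  | inv_of x _ => exact (IsEmpty.false x).elim
  | mul x y hx hy => rw [hx, hy, one_mul]

lemma freeGroup_comm_of_subsingleton (X : Type*) [Subsingleton X]
    (z w : FreeGroup X) : z * w = w * z := by
  cases isEmpty_or_nonempty X with
  | inl h => rw [all_one_of_isEmpty z, all_one_of_isEmpty w]
  | inr h =>
    obtain ⟨x0⟩ := h
    obtain ⟨k, rfl⟩ := zpow_gen x0 z
    obtain ⟨l, rfl⟩ := zpow_gen x0 w
    rw [← zpow_add, ← zpow_add, add_comm]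

lemma eq_of_of_comm {X : Type*} (x y : X)
    (h : FreeGroup.of x * FreeGroup.of y = FreeGroup.of y * FreeGroup.of x) : x = y := by
  classical
  have h1 : (FreeGroup.of x * FreeGroup.of y).toWord = [(x, true), (y, true)] := by
    rw [show (FreeGroup.of x : FreeGroup X) = mk [(x, true)] from rfl,
      toWord_cons_mul x true (FreeGroup.of y) (by simp [toWord_of]), toWord_of]
  have h2 : (FreeGroup.of y * FreeGroup.of x).toWord = [(y, true), (x, true)] := by
    rw [show (FreeGroup.of y : FreeGroup X) = mk [(y, true)] from rfl,
      toWord_cons_mul y true (FreeGroup.of x) (by simp [toWord_of]), toWord_of]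
  have := h1.symm.trans ((congrArg toWord h).trans h2)
  simp at this
  exact this.1

lemma hasFreeSubgroup_of_injective {H K : Type*} [Group H] [Group K] (f : H →* K)
    (hf : Function.Injective f) (h : HasFreeSubgroup H) : HasFreeSubgroup K := by
  obtain ⟨S, ⟨e⟩⟩ := h
  exact ⟨S.map f, ⟨(Subgroup.equivMapOfInjective S f hf).symm.trans e⟩⟩

lemma hasFreeSubgroup_of_injective_f2 {K : Type*} [Group K]
    (f : FreeGroup (Fin 2) →* K) (hf : Function.Injective f) : HasFreeSubgroup K :=
  hasFreeSubgroup_of_injective f hf ⟨⊤, ⟨Subgroup.topEquiv⟩⟩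

lemma embed_f2 {X : Type*} [DecidableEq X] (x0 y0 : X) (hne : x0 ≠ y0) :
    ∃ f : FreeGroup (Fin 2) →* FreeGroup X, Function.Injective f := by
  refine ⟨FreeGroup.lift (fun i => if i = 0 then of x0 else of y0), ?_⟩
  have hcomp : (FreeGroup.lift (fun x : X => if x = x0 then of (0 : Fin 2) else of 1)).comp
      (FreeGroup.lift (fun i : Fin 2 => if i = 0 then of x0 else of y0)) =
      MonoidHom.id (FreeGroup (Fin 2)) := by
    apply FreeGroup.ext_hom
    intro a
    fin_cases a <;> simp [hne.symm]
  intro u v huv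
  have h1 := congrArg (FreeGroup.lift (fun x : X => if x = x0 then of (0 : Fin 2) else of 1)) huv
  have h2 := congrArg (fun g => g u) hcomp
  have h3 := congrArg (fun g => g v) hcomp
  simpa [h1] using h2.symm.trans (by simpa [h1] using h3)

lemma hasFreeSubgroup_of_free_nonabelian {H : Type*} [Group H] [IsFreeGroup H]
    (h : ∃ x y : H, x * y ≠ y * x) : HasFreeSubgroup H := by
  classical
  obtain ⟨ι, ⟨b⟩⟩ := IsFreeGroup.nonempty_basis (G := H)
  set e := b.repr
  obtain ⟨x, y, hxy⟩ := h
  have hns : ¬ Subsingleton ι := by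
    intro hs
    exact hxy (e.injective (by
      rw [_root_.map_mul, _root_.map_mul]
      exact freeGroup_comm_of_subsingleton ι (e x) (e y)))
  obtain ⟨x0, y0, hne⟩ := (not_subsingleton_iff_nontrivial.mp hns).exists_pair_ne
  obtain ⟨f, hf⟩ := embed_f2 x0 y0 hne
  exact hasFreeSubgroup_of_injective_f2 (e.symm.toMonoidHom.comp f)
    (e.symm.injective.comp hf)


lemma key (M : Subgroup F2) [hn : M.Normal] (hM : M ≠ ⊥) : HasFreeSubgroup M := by
  by_cases hab : ∀ x y : ↥M, x * y = y * x
  · exfalso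
    obtain ⟨ι, ⟨b⟩⟩ := IsFreeGroup.nonempty_basis (G := ↥M)
    set e := b.repr with he
    have hss : Subsingleton ι := by
      constructor
      intro u v
      apply eq_of_of_comm u v
      have h0 := hab (e.symm (of u)) (e.symm (of v))
      have := congrArg e h0
      rwa [_root_.map_mul, _root_.map_mul, MulEquiv.apply_symm_apply,
        MulEquiv.apply_symm_apply] at this
    have hne : Nonempty ι := by
      by_contra hni
      haveI : IsEmpty ι := not_nonempty_iff.mp hni
      apply hM
      rw [Subgroup.eq_bot_iff_forall]
      intro x hx
      have h1 : e ⟨x, hx⟩ = 1 := all_one_of_isEmpty _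
      have h2 : (⟨x, hx⟩ : ↥M) = 1 := by
        apply e.injective
        rw [h1, _root_.map_one]
      exact congrArg Subtype.val h2
    obtain ⟨x0⟩ := hne
    set c : ↥M := e.symm (of x0) with hc
    have hgen : ∀ m : ↥M, ∃ k : ℤ, m = c ^ k := by
      intro m
      obtain ⟨k, hk⟩ := zpow_gen x0 (e m)
      refine ⟨k, e.injective ?_⟩
      rw [map_zpow, hc, MulEquiv.apply_symm_apply, hk]
    have hgen' : ∀ x ∈ M, ∃ k : ℤ, x = (c : F2) ^ k := by
      intro x hx
      obtain ⟨k, hk⟩ := hgen ⟨x, hx⟩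
      exact ⟨k, by rw [← SubgroupClass.coe_zpow, ← hk]⟩
    have hc1 : (c : F2) ≠ 1 := by
      intro h
      have : c = 1 := Subtype.ext h
      rw [hc] at this
      have := congrArg e this
      rw [MulEquiv.apply_symm_apply, _root_.map_one] at this
      exact of_ne_one x0 this
    have hinj : ∀ t : ℤ, (c : F2) ^ t = 1 → t = 0 := by
      intro t ht
      have h1 : (c : ↥M) ^ t = 1 := by
        apply Subtype.ext
        rw [SubgroupClass.coe_zpow]
        exact ht
      have h2 : (of x0 : FreeGroup ι) ^ t = 1 := by
        have := congrArg e h1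
        rwa [map_zpow, _root_.map_one, hc, MulEquiv.apply_symm_apply] at this
      rcases t with n | n
      · have := congrArg FreeGroup.norm h2
        simp only [Int.ofNat_eq_coe, zpow_natCast, norm_of_pow, FreeGroup.norm_one] at this
        simp [this]
      · exfalso
        have h3 : ((of x0 : FreeGroup ι) ^ (n + 1))⁻¹ = 1 := by
          rw [← zpow_natCast, ← zpow_neg]
          rw [Int.negSucc_eq] at h2
          simpa using h2
        have h4 : (of x0 : FreeGroup ι) ^ (n + 1) = 1 := by
          rwa [inv_eq_one] at h3
        have := congrArg FreeGroup.norm h4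
        simp at this
    -- conjugation sends c to c or c⁻¹; hence squares centralize c
    have hconj : ∀ g : F2, g * g * (c : F2) * (g * g)⁻¹ = c := by
      intro g
      obtain ⟨n', hn'⟩ := hgen' (g * (c : F2) * g⁻¹) (hn.conj_mem _ c.2 g)
      obtain ⟨m', hm'⟩ := hgen' (g⁻¹ * (c : F2) * g) (by simpa using hn.conj_mem _ c.2 g⁻¹)
      have key1 : (c : F2) = (c : F2) ^ (m' * n') := by
        have e1 : (g⁻¹ * (c : F2) * g) ^ n' = g⁻¹ * ((c : F2) ^ n') * g := by
          rw [show g⁻¹ * (c : F2) * g = g⁻¹ * (c : F2) * (g⁻¹)⁻¹ by rw [inv_inv],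
            conj_zpow, inv_inv]
        have e2 : ((c : F2) ^ m') ^ n' = g⁻¹ * ((c : F2) ^ n') * g := by
          rw [← hm', e1]
        rw [zpow_mul, e2, ← hn']
        group
      have hmn : m' * n' = 1 := by
        have h9 := hinj (m' * n' - 1) (by
          rw [zpow_sub, ← key1, zpow_one, mul_inv_cancel])
        omega
      rcases Int.mul_eq_one_iff_eq_one_or_neg_one.mp hmn with ⟨_, h1⟩ | ⟨_, h1⟩
      · rw [h1, zpow_one] at hn'
        rw [mul_inv_rev, show g * g * (c : F2) * (g⁻¹ * g⁻¹) =
          g * (g * (c : F2) * g⁻¹) * g⁻¹ by group, hn', hn']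
      · rw [h1] at hn'
        rw [mul_inv_rev, show g * g * (c : F2) * (g⁻¹ * g⁻¹) =
          g * (g * (c : F2) * g⁻¹) * g⁻¹ by group, hn',
          show g * ((c : F2) ^ (-1 : ℤ)) * g⁻¹ = (g * (c : F2) * g⁻¹)⁻¹ by group, hn']
        group
    have hcomm2 : ∀ g : F2, (c : F2) * g ^ 2 = g ^ 2 * (c : F2) := by
      intro g
      have h := hconj g
      rw [mul_inv_eq_iff_eq_mul] at h
      rw [pow_two, ← h]
    obtain ⟨k, hk⟩ := centralizer_pow (0 : Fin 2) 2 two_ne_zero (FreeGroup.norm (c : F2))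
      (c : F2) le_rfl (hcomm2 (of 0))
    obtain ⟨l, hl⟩ := centralizer_pow (1 : Fin 2) 2 two_ne_zero (FreeGroup.norm (c : F2))
      (c : F2) le_rfl (hcomm2 (of 1))
    set φ : F2 →* Multiplicative ℤ :=
      FreeGroup.lift (fun i : Fin 2 => if i = 0 then Multiplicative.ofAdd (1 : ℤ) else 1) with hφ
    have hφ0 : φ (of 0) = Multiplicative.ofAdd (1 : ℤ) := by simp [hφ]
    have hφ1 : φ (of 1) = 1 := by simp [hφ]
    have hk0 : k = 0 := by
      have h1 : φ ((c : F2)) = Multiplicative.ofAdd (1 : ℤ) ^ k := by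
        rw [hk, map_zpow, hφ0]
      have h2 : φ ((c : F2)) = 1 := by
        rw [hl, map_zpow, hφ1, one_zpow]
      have h3 : Multiplicative.ofAdd (1 : ℤ) ^ k = 1 := by rw [← h1, h2]
      have h4 := congrArg Multiplicative.toAdd h3
      simpa using h4
    rw [hk0, zpow_zero] at hk
    exact hc1 hk
  · push_neg at hab
    obtain ⟨x, y, hxy⟩ := hab
    exact hasFreeSubgroup_of_free_nonabelian ⟨x, y, hxy⟩


end FreeSubAux

open FreeSubAux in
theorem stmt_8 {G : Type*} [Group G] (hG : HasFreeSubgroup G)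
    (N : Subgroup G) [N.Normal] :
    HasFreeSubgroup N ∨ HasFreeSubgroup (G ⧸ N) := by

  obtain ⟨S, ⟨e⟩⟩ := hG
  let f : F2 →* G := S.subtype.comp e.symm.toMonoidHom
  have hfinj : Function.Injective f := S.subtype_injective.comp e.symm.injective
  let M : Subgroup F2 := N.comap f
  haveI : M.Normal := Subgroup.Normal.comap ‹N.Normal› f
  by_cases hM : M = ⊥
  · right
    let q : F2 →* G ⧸ N := (QuotientGroup.mk' N).comp f
    have hker : q.ker = M := by
      show ((QuotientGroup.mk' N).comp f).ker = M
      rw [← MonoidHom.comap_ker, QuotientGroup.ker_mk']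
    have hq : Function.Injective q := by
      rw [← MonoidHom.ker_eq_bot_iff, hker]
      exact hM
    exact hasFreeSubgroup_of_injective_f2 q hq
  · left
    have hfree := key M hM
    have hmem : ∀ x : ↥M, f (M.subtype x) ∈ N := fun x => Subgroup.mem_comap.mp x.2
    let g : ↥M →* ↥N := (f.comp M.subtype).codRestrict N hmem
    have hg : Function.Injective g := by
      intro a b hab2
      apply Subtype.ext
      apply hfinj
      have h3 : ((g a : ↥N) : G) = ((g b : ↥N) : G) := congrArg Subtype.val hab2
      exact h3
    exact hasFreeSubgroup_of_injective g hg hfree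
end
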